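/- Let α = 1 − 2√6/5 and define ψ : ℂ² → ℝ ∪ {−∞} by ψ(x, y) = log( |x|^{2α} + |y|² ). Call t > 0 a jumping number of ψ if there exist p, q ∈ ℕ such that the function (x,y) ↦ |x|^{2p} |y|^{2q} e^{−s ψ(x,y)} is integrable on the open unit polydisc of ℂ² for every s with 0 < s < t but is not integrable for s = t. Then the set of jumping numbers of ψ equals { m + n/α | m, n ∈ ℤ, m ≥ 1, n ≥ 1 }. -/

import Mathlib

open MeasureTheory

/-- The weight `ψ(x,y) = log(|x|^{2α} + |y|²)` with `α = 1 − 2√6/5` of Example 6.3. -/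
noncomputable def psiF (x : ℂ × ℂ) : ℝ :=
  Real.log (‖x.1‖ ^ (2 * (1 - 2 * Real.sqrt 6 / 5)) + ‖x.2‖ ^ 2)

open Set Metric
open scoped ENNReal

namespace Stmt16

@[fun_prop] lemma meas_cabs : Measurable (fun z : ℂ => ‖z‖) := continuous_norm.measurable

noncomputable def ar : ℝ := 1 - 2 * Real.sqrt 6 / 5

lemma ar_pos : 0 < ar := by
  have h6 : (0:ℝ) ≤ 6 := by norm_num
  have h : Real.sqrt 6 < 2.5 := by
    have : Real.sqrt 6 < Real.sqrt (2.5^2) :=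
      Real.sqrt_lt_sqrt h6 (by norm_num)
    simpa [Real.sqrt_sq (by norm_num : (0:ℝ) ≤ 2.5)] using this
  unfold ar; nlinarith

lemma ar_ne : ar ≠ 0 := ne_of_gt ar_pos

noncomputable def kc : ℝ≥0∞ := Measure.toSphere (volume : Measure ℂ) Set.univ

lemma kc_ne_zero : kc ≠ 0 := by
  rw [kc, Measure.toSphere_apply_univ]
  have h1 : (0:ℝ≥0∞) < volume (ball (0:ℂ) 1) := measure_ball_pos _ _ one_pos
  have h2 : (0:ℝ≥0∞) < (Module.finrank ℝ ℂ : ℝ≥0∞) := by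
    rw [Complex.finrank_real_complex]; norm_num
  exact (ENNReal.mul_pos h2.ne' h1.ne').ne'

lemma kc_ne_top : kc ≠ ⊤ := by
  rw [kc, Measure.toSphere_apply_univ]
  exact (ENNReal.mul_lt_top (by rw [Complex.finrank_real_complex]; norm_num)
    measure_ball_lt_top).ne

/-- Polar-type formula for lintegrals of radial functions on `ℂ`. -/
lemma lintegral_comp_abs {g : ℝ → ℝ≥0∞} (hg : Measurable g) :
    ∫⁻ z : ℂ, g (‖z‖) = kc * ∫⁻ r in Ioi (0:ℝ), ENNReal.ofReal r * g r := by
  have h0 : (volume : Measure ℂ) {0} = 0 := measure_singleton 0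
  have hmp := Measure.measurePreserving_homeomorphUnitSphereProd (volume : Measure ℂ)
  have hfm : Measurable fun p : sphere (0:ℂ) 1 × Ioi (0:ℝ) => g p.2 :=
    hg.comp (measurable_subtype_coe.comp measurable_snd)
  have step1 : ∫⁻ z : ℂ, g (‖z‖) = ∫⁻ z in ({0}ᶜ : Set ℂ), g (‖z‖) := by
    rw [← lintegral_add_compl (fun z => g (‖z‖)) (measurableSet_singleton (0:ℂ)),
      setLIntegral_measure_zero _ _ h0, zero_add]
  have step2 : ∫⁻ z in ({0}ᶜ : Set ℂ), g (‖z‖)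
      = ∫⁻ z : ({0}ᶜ : Set ℂ), g (‖(z:ℂ)‖) ∂(Measure.comap Subtype.val volume) := by
    have h := setLIntegral_subtype (μ := (volume : Measure ℂ))
      (measurableSet_singleton (0:ℂ)).compl univ (fun z => g (‖z‖))
    rw [image_univ, Subtype.range_coe, Measure.restrict_univ] at h
    exact h.symm
  have step3 : ∫⁻ z : ({0}ᶜ : Set ℂ), g (‖(z:ℂ)‖) ∂(Measure.comap Subtype.val volume)
      = ∫⁻ p : sphere (0:ℂ) 1 × Ioi (0:ℝ), g p.2
          ∂((volume : Measure ℂ).toSphere.prod (Measure.volumeIoiPow (Module.finrank ℝ ℂ - 1))) := by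
    rw [← hmp.lintegral_comp hfm]
    refine lintegral_congr fun z => ?_
    simp
  have step4 : ∫⁻ p : sphere (0:ℂ) 1 × Ioi (0:ℝ), g p.2
        ∂((volume : Measure ℂ).toSphere.prod (Measure.volumeIoiPow (Module.finrank ℝ ℂ - 1)))
      = kc * ∫⁻ r : Ioi (0:ℝ), g r ∂(Measure.volumeIoiPow (Module.finrank ℝ ℂ - 1)) := by
    rw [lintegral_prod _ (hfm.aemeasurable)]
    simp only [lintegral_const]
    rw [mul_comm, kc]
  have step5 : ∫⁻ r : Ioi (0:ℝ), g r ∂(Measure.volumeIoiPow (Module.finrank ℝ ℂ - 1))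
      = ∫⁻ r in Ioi (0:ℝ), ENNReal.ofReal r * g r := by
    rw [Measure.volumeIoiPow, lintegral_withDensity_eq_lintegral_mul _
      ((by exact (measurable_subtype_coe.pow_const _).ennreal_ofReal :
        Measurable fun r : Ioi (0:ℝ) => ENNReal.ofReal ((r:ℝ) ^ (Module.finrank ℝ ℂ - 1))))
      ((by exact hg.comp measurable_subtype_coe : Measurable fun r : Ioi (0:ℝ) => g (r:ℝ)))]
    have h := setLIntegral_subtype (μ := (volume : Measure ℝ)) (measurableSet_Ioi (a := (0:ℝ))) univ
      (fun r : ℝ => ENNReal.ofReal (r ^ (Module.finrank ℝ ℂ - 1)) * g r)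
    simp only [Complex.finrank_real_complex] at *
    simpa [Measure.restrict_univ, image_univ, Subtype.range_coe, pow_one, Set.Ioi_def] using h
  rw [step1, step2, step3, step4, step5]

lemma lintegral_Ioc_rpow {u R : ℝ} (hu : -1 < u) (hR : 0 ≤ R) :
    ∫⁻ r in Ioc (0:ℝ) R, ENNReal.ofReal (r ^ u) = ENNReal.ofReal (R ^ (u + 1) / (u + 1)) := by
  have hu1 : u + 1 ≠ 0 := by linarith
  rcases eq_or_lt_of_le hR with hR0 | hR0
  · rw [← hR0]
    simp [Real.zero_rpow hu1]
  · have hInt : IntegrableOn (fun r : ℝ => r ^ u) (Ioc 0 R) := by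
      have h := intervalIntegral.intervalIntegrable_rpow' (a := 0) (b := R) hu
      rwa [intervalIntegrable_iff_integrableOn_Ioc_of_le hR] at h
    have hnn : 0 ≤ᵐ[volume.restrict (Ioc (0:ℝ) R)] fun r : ℝ => r ^ u := by
      filter_upwards [ae_restrict_mem measurableSet_Ioc] with r hr
      exact Real.rpow_nonneg hr.1.le u
    rw [← ofReal_integral_eq_lintegral_ofReal hInt hnn]
    congr 1
    rw [← intervalIntegral.integral_of_le hR, integral_rpow (Or.inl hu),
      Real.zero_rpow hu1, sub_zero]

lemma lintegral_Ioo01_rpow_top {u : ℝ} (hu : u ≤ -1) :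
    ∫⁻ r in Ioo (0:ℝ) 1, ENNReal.ofReal (r ^ u) = ⊤ := by
  by_contra h
  have hlt : ∫⁻ r in Ioo (0:ℝ) 1, ENNReal.ofReal (r ^ u) < ⊤ := lt_top_iff_ne_top.2 h
  have hnn : 0 ≤ᵐ[volume.restrict (Ioo (0:ℝ) 1)] fun r : ℝ => r ^ u := by
    filter_upwards [ae_restrict_mem measurableSet_Ioo] with r hr
    exact Real.rpow_nonneg hr.1.le u
  have hint : IntegrableOn (fun r : ℝ => r ^ u) (Ioo (0:ℝ) 1) := by
    refine ⟨(Measurable.aestronglyMeasurable ?_), (hasFiniteIntegral_iff_ofReal hnn).2 hlt⟩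
    fun_prop
  have := (intervalIntegral.integrableOn_Ioo_rpow_iff one_pos).1 hint
  linarith

lemma indicator_comp_abs (S : Set ℝ) (f : ℝ → ℝ≥0∞) (z : ℂ) :
    ({w : ℂ | ‖w‖ ∈ S}).indicator (fun w => f (‖w‖)) z
      = S.indicator f (‖z‖) := by
  by_cases h : ‖z‖ ∈ S <;> simp [Set.indicator_apply, h]

lemma ball_lintegral {t R : ℝ} (ht : -2 < t) (hR : 0 ≤ R) :
    ∫⁻ z : ℂ, ({w : ℂ | ‖w‖ ≤ R}).indicator
        (fun w => ENNReal.ofReal (‖w‖ ^ t)) z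
      = kc * ENNReal.ofReal (R ^ (t + 2) / (t + 2)) := by
  have hgm : Measurable fun r : ℝ => (Iic R).indicator (fun r : ℝ => ENNReal.ofReal (r ^ t)) r :=
    Measurable.indicator (by fun_prop) measurableSet_Iic
  have h1 : ∫⁻ z : ℂ, ({w : ℂ | ‖w‖ ≤ R}).indicator
        (fun w => ENNReal.ofReal (‖w‖ ^ t)) z
      = ∫⁻ z : ℂ, (Iic R).indicator (fun r : ℝ => ENNReal.ofReal (r ^ t)) (‖z‖) := by
    refine lintegral_congr fun z => ?_
    by_cases h : ‖z‖ ≤ R <;> simp [Set.indicator_apply, h]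
  rw [h1, lintegral_comp_abs hgm]
  congr 1
  have h2 : ∀ r : ℝ, ENNReal.ofReal r * (Iic R).indicator (fun r : ℝ => ENNReal.ofReal (r ^ t)) r
      = (Iic R).indicator (fun r : ℝ => ENNReal.ofReal r * ENNReal.ofReal (r ^ t)) r := by
    intro r
    by_cases h : r ∈ Iic R <;> simp [Set.indicator_apply, h]
  rw [lintegral_congr fun r => h2 r, lintegral_indicator measurableSet_Iic,
    Measure.restrict_restrict measurableSet_Iic]
  have h3 : Iic R ∩ Ioi (0:ℝ) = Ioc (0:ℝ) R := by
    ext r; simp [mem_Ioc, and_comm]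
  rw [h3]
  have h4 : ∀ᵐ r ∂(volume.restrict (Ioc (0:ℝ) R)),
      ENNReal.ofReal r * ENNReal.ofReal (r ^ t) = ENNReal.ofReal (r ^ (t + 1)) := by
    filter_upwards [ae_restrict_mem measurableSet_Ioc] with r hr
    rw [← ENNReal.ofReal_mul hr.1.le, Real.rpow_add_one (ne_of_gt hr.1), mul_comm]
  rw [lintegral_congr_ae h4, lintegral_Ioc_rpow (by linarith) hR]
  ring_nf

lemma ball_lintegral_top {t : ℝ} (ht : t ≤ -2) :
    ∫⁻ z : ℂ, ({w : ℂ | ‖w‖ < 1}).indicator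
        (fun w => ENNReal.ofReal (‖w‖ ^ t)) z = ⊤ := by
  have hgm : Measurable fun r : ℝ => (Iio (1:ℝ)).indicator (fun r : ℝ => ENNReal.ofReal (r ^ t)) r :=
    Measurable.indicator (by fun_prop) measurableSet_Iio
  have h1 : ∫⁻ z : ℂ, ({w : ℂ | ‖w‖ < 1}).indicator
        (fun w => ENNReal.ofReal (‖w‖ ^ t)) z
      = ∫⁻ z : ℂ, (Iio (1:ℝ)).indicator (fun r : ℝ => ENNReal.ofReal (r ^ t)) (‖z‖) := by
    refine lintegral_congr fun z => ?_
    by_cases h : ‖z‖ < 1 <;> simp [Set.indicator_apply, h]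
  rw [h1, lintegral_comp_abs hgm]
  have h2 : ∀ r : ℝ, ENNReal.ofReal r * (Iio (1:ℝ)).indicator (fun r : ℝ => ENNReal.ofReal (r ^ t)) r
      = (Iio (1:ℝ)).indicator (fun r : ℝ => ENNReal.ofReal r * ENNReal.ofReal (r ^ t)) r := by
    intro r
    by_cases h : r ∈ Iio (1:ℝ) <;> simp [Set.indicator_apply, h]
  rw [lintegral_congr fun r => h2 r, lintegral_indicator measurableSet_Iio,
    Measure.restrict_restrict measurableSet_Iio]
  have h3 : Iio (1:ℝ) ∩ Ioi (0:ℝ) = Ioo (0:ℝ) 1 := by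
    ext r; simp [mem_Ioo, and_comm]
  rw [h3]
  have h4 : ∀ᵐ r ∂(volume.restrict (Ioo (0:ℝ) 1)),
      ENNReal.ofReal r * ENNReal.ofReal (r ^ t) = ENNReal.ofReal (r ^ (t + 1)) := by
    filter_upwards [ae_restrict_mem measurableSet_Ioo] with r hr
    rw [← ENNReal.ofReal_mul hr.1.le, Real.rpow_add_one (ne_of_gt hr.1), mul_comm]
  rw [lintegral_congr_ae h4, lintegral_Ioo01_rpow_top (by linarith)]
  exact ENNReal.mul_top kc_ne_zero

lemma unit_lintegral_lt_top_iff {t : ℝ} :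
    (∫⁻ z : ℂ, ({w : ℂ | ‖w‖ < 1}).indicator
      (fun w => ENNReal.ofReal (‖w‖ ^ t)) z) < ⊤ ↔ -2 < t := by
  constructor
  · intro h
    by_contra hle
    rw [ball_lintegral_top (by linarith)] at h
    exact absurd h (by simp)
  · intro ht
    have hmono : ∀ z : ℂ, ({w : ℂ | ‖w‖ < 1}).indicator
          (fun w => ENNReal.ofReal (‖w‖ ^ t)) z
        ≤ ({w : ℂ | ‖w‖ ≤ 1}).indicator
          (fun w => ENNReal.ofReal (‖w‖ ^ t)) z := by
      intro z
      by_cases h : ‖z‖ < 1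
      · simp [Set.indicator_apply, h, h.le]
      · simp [Set.indicator_apply, h]
    calc _ ≤ ∫⁻ z : ℂ, ({w : ℂ | ‖w‖ ≤ 1}).indicator
          (fun w => ENNReal.ofReal (‖w‖ ^ t)) z := lintegral_mono hmono
    _ = kc * ENNReal.ofReal ((1:ℝ) ^ (t + 2) / (t + 2)) := ball_lintegral ht zero_le_one
    _ < ⊤ := ENNReal.mul_lt_top (lt_top_iff_ne_top.2 kc_ne_top) ENNReal.ofReal_lt_top

lemma const_mul_lt_top_iff {c x : ℝ≥0∞} (h0 : c ≠ 0) (ht : c ≠ ⊤) :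
    c * x < ⊤ ↔ x < ⊤ := by
  constructor
  · intro h
    by_contra hx
    rw [not_lt, top_le_iff] at hx
    rw [hx, ENNReal.mul_top h0] at h
    exact absurd h (by simp)
  · intro h
    exact ENNReal.mul_lt_top (lt_top_iff_ne_top.2 ht) h

lemma null1 : (volume : Measure (ℂ × ℂ)) {z : ℂ × ℂ | z.1 = 0} = 0 := by
  have h : {z : ℂ × ℂ | z.1 = 0} = ({0} : Set ℂ) ×ˢ (univ : Set ℂ) := by
    ext z
    simp only [Set.mem_setOf_eq, Set.mem_prod, Set.mem_singleton_iff, Set.mem_univ, and_true]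
  rw [h, Measure.volume_eq_prod, Measure.prod_prod]
  simp

lemma null2 : (volume : Measure (ℂ × ℂ)) {z : ℂ × ℂ | z.2 = 0} = 0 := by
  have h : {z : ℂ × ℂ | z.2 = 0} = (univ : Set ℂ) ×ˢ ({0} : Set ℂ) := by
    ext z
    simp only [Set.mem_setOf_eq, Set.mem_prod, Set.mem_singleton_iff, Set.mem_univ, true_and]
  rw [h, Measure.volume_eq_prod, Measure.prod_prod]
  simp

noncomputable def PP (p q : ℕ) (z : ℂ × ℂ) : ℝ :=
  ‖z.1‖ ^ (2 * (p : ℝ)) * ‖z.2‖ ^ (2 * (q : ℝ))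

noncomputable def FF (p q : ℕ) (s : ℝ) (z : ℂ × ℂ) : ℝ :=
  PP p q z * Real.exp (-(s * psiF z))

noncomputable def NN (p q : ℕ) (s : ℝ) (z : ℂ × ℂ) : ℝ≥0∞ :=
  ENNReal.ofReal (PP p q z * (max (‖z.1‖ ^ (2 * ar)) (‖z.2‖ ^ 2)) ^ (-s))

def DD : Set (ℂ × ℂ) := {z | ‖z.1‖ < 1 ∧ ‖z.2‖ < 1}
noncomputable def D1 : Set (ℂ × ℂ) :=
  {z | ‖z.1‖ < 1 ∧ ‖z.2‖ ≤ ‖z.1‖ ^ ar}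
noncomputable def D2 : Set (ℂ × ℂ) :=
  {z | ‖z.2‖ < 1 ∧ ‖z.1‖ ≤ ‖z.2‖ ^ ar⁻¹}

lemma psiF_eq (z : ℂ × ℂ) :
    psiF z = Real.log (‖z.1‖ ^ (2 * ar) + ‖z.2‖ ^ 2) := rfl

lemma meas_abs1 : Measurable fun z : ℂ × ℂ => ‖z.1‖ :=
  (continuous_norm.comp continuous_fst).measurable

lemma meas_abs2 : Measurable fun z : ℂ × ℂ => ‖z.2‖ :=
  (continuous_norm.comp continuous_snd).measurable

lemma meas_PP (p q : ℕ) : Measurable (PP p q) := by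
  unfold PP; fun_prop

lemma meas_psiF : Measurable psiF := by
  unfold psiF
  apply Real.measurable_log.comp
  fun_prop

lemma meas_FF (p q : ℕ) (s : ℝ) : Measurable (FF p q s) := by
  unfold FF
  exact (meas_PP p q).mul (Real.measurable_exp.comp ((meas_psiF.const_mul s).neg))

lemma meas_NN (p q : ℕ) (s : ℝ) : Measurable (NN p q s) := by
  unfold NN
  apply Measurable.ennreal_ofReal
  apply (meas_PP p q).mul
  fun_prop

lemma meas_DD : MeasurableSet DD := by
  unfold DD
  have : DD = {z : ℂ × ℂ | ‖z.1‖ < 1} ∩ {z | ‖z.2‖ < 1} := rfl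
  exact (measurableSet_lt meas_abs1 measurable_const).inter
    (measurableSet_lt meas_abs2 measurable_const)

lemma meas_D1 : MeasurableSet D1 :=
  (measurableSet_lt meas_abs1 measurable_const).inter
    (measurableSet_le meas_abs2 (by fun_prop))

lemma meas_D2 : MeasurableSet D2 :=
  (measurableSet_lt meas_abs2 measurable_const).inter
    (measurableSet_le meas_abs1 (by fun_prop))

lemma PP_nonneg (p q : ℕ) (z : ℂ × ℂ) : 0 ≤ PP p q z :=
  mul_nonneg (Real.rpow_nonneg (norm_nonneg _) _)
    (Real.rpow_nonneg (norm_nonneg _) _)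

lemma FF_nonneg (p q : ℕ) (s : ℝ) (z : ℂ × ℂ) : 0 ≤ FF p q s z :=
  mul_nonneg (PP_nonneg p q z) (Real.exp_nonneg _)

section pw
variable {p q : ℕ} {s : ℝ} {z : ℂ × ℂ}

lemma b_pos (hz : z ≠ 0) : 0 < ‖z.1‖ ^ (2 * ar) + ‖z.2‖ ^ 2 := by
  have h : z.1 ≠ 0 ∨ z.2 ≠ 0 := by
    by_contra hc
    push_neg at hc
    exact hz (Prod.ext hc.1 hc.2)
  rcases h with h | h
  · exact add_pos_of_pos_of_nonneg
      (Real.rpow_pos_of_pos (norm_pos_iff.2 h) _) (sq_nonneg _)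
  · exact add_pos_of_nonneg_of_pos (Real.rpow_nonneg (norm_nonneg _) _)
      (pow_pos (norm_pos_iff.2 h) 2)

lemma max_pos (hz : z ≠ 0) : 0 < max (‖z.1‖ ^ (2 * ar)) (‖z.2‖ ^ 2) := by
  have hb := b_pos (z := z) hz
  have h1 := le_max_left (‖z.1‖ ^ (2 * ar)) (‖z.2‖ ^ 2)
  have h2 := le_max_right (‖z.1‖ ^ (2 * ar)) (‖z.2‖ ^ 2)
  linarith

lemma FF_eq (hz : z ≠ 0) :
    FF p q s z = PP p q z * (‖z.1‖ ^ (2 * ar) + ‖z.2‖ ^ 2) ^ (-s) := by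
  unfold FF
  congr 1
  rw [psiF_eq, Real.rpow_def_of_pos (b_pos hz)]
  congr 1
  ring

lemma cmp1 (hs : 0 < s) (hz : z ≠ 0) : ENNReal.ofReal (FF p q s z) ≤ NN p q s z := by
  rw [FF_eq hz]
  unfold NN
  apply ENNReal.ofReal_le_ofReal
  apply mul_le_mul_of_nonneg_left _ (PP_nonneg p q z)
  apply Real.rpow_le_rpow_of_nonpos (max_pos hz) _ (by linarith)
  exact max_le (le_add_of_nonneg_right (sq_nonneg _))
    (le_add_of_nonneg_left (Real.rpow_nonneg (norm_nonneg _) _))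

lemma cmp2 (hs : 0 < s) (hz : z ≠ 0) :
    NN p q s z ≤ ENNReal.ofReal (2 ^ s) * ENNReal.ofReal (FF p q s z) := by
  rw [FF_eq hz, ← ENNReal.ofReal_mul (Real.rpow_nonneg (by norm_num) s)]
  unfold NN
  apply ENNReal.ofReal_le_ofReal
  set A := ‖z.1‖ ^ (2 * ar) with hA
  set B := (‖z.2‖ ^ 2 : ℝ) with hB
  have hb : 0 < A + B := b_pos hz
  have hmax : 0 < max A B := max_pos hz
  have h1 := le_max_left A B
  have h2 := le_max_right A B
  have hd : (A + B) / 2 ≤ max A B := by linarith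
  have hd0 : 0 < (A + B) / 2 := by linarith
  have key : (max A B) ^ (-s) ≤ 2 ^ s * (A + B) ^ (-s) := by
    calc (max A B) ^ (-s) ≤ ((A + B) / 2) ^ (-s) :=
          Real.rpow_le_rpow_of_nonpos hd0 hd (by linarith)
    _ = 2 ^ s * (A + B) ^ (-s) := by
        rw [Real.div_rpow hb.le (by norm_num), Real.rpow_neg (by norm_num : (0:ℝ) ≤ 2)]
        rw [div_eq_mul_inv, inv_inv, mul_comm]
  calc PP p q z * (max A B) ^ (-s) ≤ PP p q z * (2 ^ s * (A + B) ^ (-s)) :=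
        mul_le_mul_of_nonneg_left key (PP_nonneg p q z)
  _ = 2 ^ s * (PP p q z * (A + B) ^ (-s)) := by ring

end pw

lemma ae_ne_zero_c : ∀ᵐ x : ℂ ∂volume, x ≠ 0 := by
  rw [ae_iff]
  simp only [ne_eq, not_not]
  have : {x : ℂ | x = 0} = {0} := by ext x; simp
  rw [this]
  exact measure_singleton 0

lemma region1_gen (u tq : ℝ) (htq : -2 < tq) :
    ∫⁻ z in D1, ENNReal.ofReal (‖z.1‖ ^ u) * ENNReal.ofReal (‖z.2‖ ^ tq)
      = kc * ENNReal.ofReal ((tq + 2)⁻¹)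
        * ∫⁻ x : ℂ, ({w : ℂ | ‖w‖ < 1}).indicator
            (fun w => ENNReal.ofReal (‖w‖ ^ (u + ar * (tq + 2)))) x := by
  have htq2 : (0:ℝ) < tq + 2 := by linarith
  set M : ℂ × ℂ → ℝ≥0∞ :=
    fun z => ENNReal.ofReal (‖z.1‖ ^ u) * ENNReal.ofReal (‖z.2‖ ^ tq) with hM
  have hMmeas : Measurable M := by
    apply Measurable.mul (f := fun z : ℂ × ℂ => ENNReal.ofReal (‖z.1‖ ^ u))
      (g := fun z : ℂ × ℂ => ENNReal.ofReal (‖z.2‖ ^ tq)) <;> · apply Measurable.ennreal_ofReal; fun_prop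
  rw [← lintegral_indicator meas_D1]
  rw [Measure.volume_eq_prod, lintegral_prod _ ((hMmeas.indicator meas_D1).aemeasurable)]
  have hin_meas : ∀ R : ℝ, Measurable fun y : ℂ =>
      ({w : ℂ | ‖w‖ ≤ R}).indicator (fun w => ENNReal.ofReal (‖w‖ ^ tq)) y :=
    fun R => Measurable.indicator (by apply Measurable.ennreal_ofReal; fun_prop)
      (measurableSet_le meas_cabs measurable_const)
  have inner : ∀ x : ℂ, (∫⁻ y : ℂ, D1.indicator M (x, y))
      = ({w : ℂ | ‖w‖ < 1}).indicator
          (fun w => ENNReal.ofReal (‖w‖ ^ u)) x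
        * (kc * ENNReal.ofReal ((‖x‖ ^ ar) ^ (tq + 2) / (tq + 2))) := by
    intro x
    by_cases hx : ‖x‖ < 1
    · have hpt : ∀ y : ℂ, D1.indicator M (x, y)
          = ENNReal.ofReal (‖x‖ ^ u) *
            ({w : ℂ | ‖w‖ ≤ ‖x‖ ^ ar}).indicator
              (fun w => ENNReal.ofReal (‖w‖ ^ tq)) y := by
        intro y
        by_cases hy : ‖y‖ ≤ ‖x‖ ^ ar
        · have hmem : (x, y) ∈ D1 := ⟨hx, hy⟩
          rw [Set.indicator_of_mem hmem, Set.indicator_of_mem (by exact hy)]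
        · have hmem : (x, y) ∉ D1 := fun hc => hy hc.2
          rw [Set.indicator_of_notMem hmem, Set.indicator_of_notMem (by exact hy), mul_zero]
      rw [lintegral_congr hpt, lintegral_const_mul _ (hin_meas _),
        ball_lintegral htq (Real.rpow_nonneg (norm_nonneg x) ar),
        Set.indicator_of_mem (by exact hx)]
    · have hpt : ∀ y : ℂ, D1.indicator M (x, y) = 0 := fun y =>
        Set.indicator_of_notMem (fun hc => hx hc.1) _
      rw [lintegral_congr hpt, lintegral_zero,
        Set.indicator_of_notMem (by exact hx), zero_mul]
  rw [lintegral_congr inner]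
  have hout : ∀ᵐ x : ℂ ∂volume,
      ({w : ℂ | ‖w‖ < 1}).indicator
          (fun w => ENNReal.ofReal (‖w‖ ^ u)) x
        * (kc * ENNReal.ofReal ((‖x‖ ^ ar) ^ (tq + 2) / (tq + 2)))
      = (kc * ENNReal.ofReal ((tq + 2)⁻¹))
        * ({w : ℂ | ‖w‖ < 1}).indicator
            (fun w => ENNReal.ofReal (‖w‖ ^ (u + ar * (tq + 2)))) x := by
    filter_upwards [ae_ne_zero_c] with x hx0
    have habs : 0 < ‖x‖ := norm_pos_iff.2 hx0
    by_cases hx : ‖x‖ < 1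
    · rw [Set.indicator_of_mem (by exact hx), Set.indicator_of_mem (by exact hx)]
      rw [← Real.rpow_mul (norm_nonneg x) ar (tq + 2), div_eq_mul_inv,
        ENNReal.ofReal_mul (Real.rpow_nonneg (norm_nonneg x) _),
        Real.rpow_add habs u (ar * (tq + 2)),
        ENNReal.ofReal_mul (Real.rpow_nonneg (norm_nonneg x) u)]
      ring
    · rw [Set.indicator_of_notMem (by exact hx), Set.indicator_of_notMem (by exact hx),
        zero_mul, mul_zero]
  rw [lintegral_congr_ae hout]
  exact lintegral_const_mul' _ _
    (ENNReal.mul_ne_top kc_ne_top ENNReal.ofReal_ne_top)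

lemma region2_gen (v tp : ℝ) (htp : -2 < tp) :
    ∫⁻ z in D2, ENNReal.ofReal (‖z.1‖ ^ tp) * ENNReal.ofReal (‖z.2‖ ^ v)
      = kc * ENNReal.ofReal ((tp + 2)⁻¹)
        * ∫⁻ y : ℂ, ({w : ℂ | ‖w‖ < 1}).indicator
            (fun w => ENNReal.ofReal (‖w‖ ^ (v + ar⁻¹ * (tp + 2)))) y := by
  have htp2 : (0:ℝ) < tp + 2 := by linarith
  set M : ℂ × ℂ → ℝ≥0∞ :=
    fun z => ENNReal.ofReal (‖z.1‖ ^ tp) * ENNReal.ofReal (‖z.2‖ ^ v) with hM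
  have hMmeas : Measurable M := by
    apply Measurable.mul (f := fun z : ℂ × ℂ => ENNReal.ofReal (‖z.1‖ ^ tp))
      (g := fun z : ℂ × ℂ => ENNReal.ofReal (‖z.2‖ ^ v)) <;> · apply Measurable.ennreal_ofReal; fun_prop
  rw [← lintegral_indicator meas_D2]
  rw [Measure.volume_eq_prod, lintegral_prod_symm _ ((hMmeas.indicator meas_D2).aemeasurable)]
  have hin_meas : ∀ R : ℝ, Measurable fun w : ℂ =>
      ({w : ℂ | ‖w‖ ≤ R}).indicator (fun w => ENNReal.ofReal (‖w‖ ^ tp)) w :=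
    fun R => Measurable.indicator (by apply Measurable.ennreal_ofReal; fun_prop)
      (measurableSet_le meas_cabs measurable_const)
  have inner : ∀ y : ℂ, (∫⁻ x : ℂ, D2.indicator M (x, y))
      = ({w : ℂ | ‖w‖ < 1}).indicator
          (fun w => ENNReal.ofReal (‖w‖ ^ v)) y
        * (kc * ENNReal.ofReal ((‖y‖ ^ ar⁻¹) ^ (tp + 2) / (tp + 2))) := by
    intro y
    by_cases hy : ‖y‖ < 1
    · have hpt : ∀ x : ℂ, D2.indicator M (x, y)
          = ENNReal.ofReal (‖y‖ ^ v) *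
            ({w : ℂ | ‖w‖ ≤ ‖y‖ ^ ar⁻¹}).indicator
              (fun w => ENNReal.ofReal (‖w‖ ^ tp)) x := by
        intro x
        by_cases hx : ‖x‖ ≤ ‖y‖ ^ ar⁻¹
        · have hmem : (x, y) ∈ D2 := ⟨hy, hx⟩
          rw [Set.indicator_of_mem hmem, Set.indicator_of_mem (by exact hx)]
          exact mul_comm _ _
        · have hmem : (x, y) ∉ D2 := fun hc => hx hc.2
          rw [Set.indicator_of_notMem hmem, Set.indicator_of_notMem (by exact hx), mul_zero]
      rw [lintegral_congr hpt, lintegral_const_mul _ (hin_meas _),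
        ball_lintegral htp (Real.rpow_nonneg (norm_nonneg y) ar⁻¹),
        Set.indicator_of_mem (by exact hy)]
    · have hpt : ∀ x : ℂ, D2.indicator M (x, y) = 0 := fun x =>
        Set.indicator_of_notMem (fun hc => hy hc.1) _
      rw [lintegral_congr hpt, lintegral_zero,
        Set.indicator_of_notMem (by exact hy), zero_mul]
  rw [lintegral_congr inner]
  have hout : ∀ᵐ y : ℂ ∂volume,
      ({w : ℂ | ‖w‖ < 1}).indicator
          (fun w => ENNReal.ofReal (‖w‖ ^ v)) y
        * (kc * ENNReal.ofReal ((‖y‖ ^ ar⁻¹) ^ (tp + 2) / (tp + 2)))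
      = (kc * ENNReal.ofReal ((tp + 2)⁻¹))
        * ({w : ℂ | ‖w‖ < 1}).indicator
            (fun w => ENNReal.ofReal (‖w‖ ^ (v + ar⁻¹ * (tp + 2)))) y := by
    filter_upwards [ae_ne_zero_c] with y hy0
    have habs : 0 < ‖y‖ := norm_pos_iff.2 hy0
    by_cases hy : ‖y‖ < 1
    · rw [Set.indicator_of_mem (by exact hy), Set.indicator_of_mem (by exact hy)]
      rw [← Real.rpow_mul (norm_nonneg y) ar⁻¹ (tp + 2), div_eq_mul_inv,
        ENNReal.ofReal_mul (Real.rpow_nonneg (norm_nonneg y) _),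
        Real.rpow_add habs v (ar⁻¹ * (tp + 2)),
        ENNReal.ofReal_mul (Real.rpow_nonneg (norm_nonneg y) v)]
      ring
    · rw [Set.indicator_of_notMem (by exact hy), Set.indicator_of_notMem (by exact hy),
        zero_mul, mul_zero]
  rw [lintegral_congr_ae hout]
  exact lintegral_const_mul' _ _
    (ENNReal.mul_ne_top kc_ne_top ENNReal.ofReal_ne_top)

lemma rpow_two_mul (x c : ℝ) (hx : 0 ≤ x) : (x ^ c) ^ 2 = x ^ (2 * c) := by
  rw [← Real.rpow_natCast (x ^ c) 2, ← Real.rpow_mul hx]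
  norm_num [mul_comm]

lemma D1_subset : D1 ⊆ DD := by
  rintro z ⟨h1, h2⟩
  refine ⟨h1, lt_of_le_of_lt h2 ?_⟩
  exact Real.rpow_lt_one (norm_nonneg _) h1 ar_pos

lemma D2_subset : D2 ⊆ DD := by
  rintro z ⟨h1, h2⟩
  refine ⟨lt_of_le_of_lt h2 ?_, h1⟩
  exact Real.rpow_lt_one (norm_nonneg _) h1 (inv_pos.2 ar_pos)

lemma DD_subset_union : DD ⊆ D1 ∪ D2 := by
  rintro z ⟨h1, h2⟩
  rcases le_total (‖z.2‖ ^ 2) (‖z.1‖ ^ (2 * ar)) with h | h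
  · left
    refine ⟨h1, ?_⟩
    rw [← rpow_two_mul (‖z.1‖) ar (norm_nonneg _)] at h
    nlinarith [norm_nonneg z.2, Real.rpow_nonneg (norm_nonneg z.1) ar]
  · right
    refine ⟨h2, ?_⟩
    have key : ‖z.1‖ ^ ar ≤ ‖z.2‖ := by
      rw [← rpow_two_mul (‖z.1‖) ar (norm_nonneg _)] at h
      nlinarith [norm_nonneg z.2, Real.rpow_nonneg (norm_nonneg z.1) ar]
    have := Real.rpow_le_rpow (Real.rpow_nonneg (norm_nonneg z.1) ar) key
      ((inv_pos.2 ar_pos).le)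
    rwa [← Real.rpow_mul (norm_nonneg z.1), mul_inv_cancel₀ ar_ne,
      Real.rpow_one] at this

lemma arith1 (p q : ℕ) (s : ℝ) :
    (-2 < 2 * (p:ℝ) - 2 * ar * s + ar * (2 * (q:ℝ) + 2)) ↔
      s < ((q:ℝ) + 1) + ((p:ℝ) + 1) / ar := by
  have h := ar_pos
  have hd : ar * (((p:ℝ) + 1) / ar) = (p:ℝ) + 1 := mul_div_cancel₀ _ ar_ne
  constructor
  · intro hlt
    by_contra hge
    push_neg at hge
    have h2 := mul_le_mul_of_nonneg_left hge h.le
    nlinarith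
  · intro hlt
    have h2 := mul_lt_mul_of_pos_left hlt h
    nlinarith

lemma arith2 (p q : ℕ) (s : ℝ) :
    (-2 < 2 * (q:ℝ) - 2 * s + ar⁻¹ * (2 * (p:ℝ) + 2)) ↔
      s < ((q:ℝ) + 1) + ((p:ℝ) + 1) / ar := by
  have hd : ar⁻¹ * (2 * (p:ℝ) + 2) = 2 * (((p:ℝ) + 1) / ar) := by
    rw [div_eq_inv_mul]
    ring
  rw [hd]
  constructor <;> intro <;> linarith

lemma main_iff (p q : ℕ) {s : ℝ} (hs : 0 < s) :
    IntegrableOn (fun x : ℂ × ℂ =>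
        ‖x.1‖ ^ (2 * (p : ℝ)) * ‖x.2‖ ^ (2 * (q : ℝ)) *
          Real.exp (-(s * psiF x)))
      {x : ℂ × ℂ | ‖x.1‖ < 1 ∧ ‖x.2‖ < 1} volume
    ↔ s < ((q:ℝ) + 1) + ((p:ℝ) + 1) / ar := by
  have hfun : (fun x : ℂ × ℂ =>
      ‖x.1‖ ^ (2 * (p : ℝ)) * ‖x.2‖ ^ (2 * (q : ℝ)) *
        Real.exp (-(s * psiF x))) = FF p q s := rfl
  have hset : {x : ℂ × ℂ | ‖x.1‖ < 1 ∧ ‖x.2‖ < 1} = DD := rfl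
  rw [hfun, hset]
  -- Step A : reduction to a lintegral
  have hsm : AEStronglyMeasurable (FF p q s) (volume.restrict DD) :=
    (meas_FF p q s).aestronglyMeasurable
  have h0 : 0 ≤ᵐ[volume.restrict DD] FF p q s :=
    Filter.Eventually.of_forall (FF_nonneg p q s)
  have hiff1 : IntegrableOn (FF p q s) DD volume ↔
      ∫⁻ z in DD, ENNReal.ofReal (FF p q s z) < ⊤ := by
    constructor
    · intro h
      exact (hasFiniteIntegral_iff_ofReal h0).1 h.2
    · intro h
      exact ⟨hsm, (hasFiniteIntegral_iff_ofReal h0).2 h⟩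
  -- almost everywhere nonzero
  have hane : ∀ S : Set (ℂ × ℂ), ∀ᵐ z ∂(volume.restrict S), z ≠ 0 := by
    intro S
    apply ae_restrict_of_ae
    rw [ae_iff]
    refine measure_mono_null ?_ null1
    intro z hz
    simp only [ne_eq, not_not, Set.mem_setOf_eq] at hz ⊢
    rw [hz]
    rfl
  -- comparison with NN
  have hcmp : (∫⁻ z in DD, ENNReal.ofReal (FF p q s z)) < ⊤ ↔
      (∫⁻ z in DD, NN p q s z) < ⊤ := by
    constructor
    · intro h
      have hle : ∫⁻ z in DD, NN p q s z
          ≤ ENNReal.ofReal (2 ^ s) * ∫⁻ z in DD, ENNReal.ofReal (FF p q s z) := by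
        rw [← lintegral_const_mul' _ _ ENNReal.ofReal_ne_top]
        exact lintegral_mono_ae ((hane DD).mono fun z hz => cmp2 hs hz)
      exact lt_of_le_of_lt hle (ENNReal.mul_lt_top ENNReal.ofReal_lt_top h)
    · intro h
      exact lt_of_le_of_lt
        (lintegral_mono_ae ((hane DD).mono fun z hz => cmp1 hs hz)) h
  -- splitting into the two regions
  have hsplit : (∫⁻ z in DD, NN p q s z) < ⊤ ↔
      ((∫⁻ z in D1, NN p q s z) < ⊤ ∧ (∫⁻ z in D2, NN p q s z) < ⊤) := by
    constructor
    · intro h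
      exact ⟨lt_of_le_of_lt (lintegral_mono_set D1_subset) h,
        lt_of_le_of_lt (lintegral_mono_set D2_subset) h⟩
    · rintro ⟨h1, h2⟩
      calc ∫⁻ z in DD, NN p q s z ≤ ∫⁻ z in D1 ∪ D2, NN p q s z :=
            lintegral_mono_set DD_subset_union
      _ ≤ (∫⁻ z in D1, NN p q s z) + ∫⁻ z in D2, NN p q s z :=
            lintegral_union_le _ _ _
      _ < ⊤ := ENNReal.add_lt_top.2 ⟨h1, h2⟩
  -- rewriting NN on D1
  have hr1 : ∫⁻ z in D1, NN p q s z
      = ∫⁻ z in D1, ENNReal.ofReal (‖z.1‖ ^ (2 * (p:ℝ) - 2 * ar * s))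
          * ENNReal.ofReal (‖z.2‖ ^ (2 * (q:ℝ))) := by
    apply lintegral_congr_ae
    have h1 : ∀ᵐ z ∂(volume.restrict D1), z ∈ D1 := ae_restrict_mem meas_D1
    have h2 : ∀ᵐ z ∂(volume.restrict D1), z.1 ≠ 0 := by
      apply ae_restrict_of_ae
      rw [ae_iff]
      simp only [ne_eq, not_not]
      exact null1
    filter_upwards [h1, h2] with z hzD hz1
    have hx : 0 < ‖z.1‖ := norm_pos_iff.2 hz1
    have hBA : ‖z.2‖ ^ 2 ≤ ‖z.1‖ ^ (2 * ar) := by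
      rw [← rpow_two_mul (‖z.1‖) ar (norm_nonneg _)]
      exact pow_le_pow_left₀ (norm_nonneg _) hzD.2 2
    unfold NN PP
    rw [max_eq_left hBA,
      ← ENNReal.ofReal_mul (Real.rpow_nonneg (norm_nonneg _) _)]
    congr 1
    rw [← Real.rpow_mul (norm_nonneg z.1) (2 * ar) (-s), mul_right_comm,
      ← Real.rpow_add hx, show 2 * (p:ℝ) + 2 * ar * -s = 2 * (p:ℝ) - 2 * ar * s by ring]
  -- rewriting NN on D2
  have hr2 : ∫⁻ z in D2, NN p q s z
      = ∫⁻ z in D2, ENNReal.ofReal (‖z.1‖ ^ (2 * (p:ℝ)))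
          * ENNReal.ofReal (‖z.2‖ ^ (2 * (q:ℝ) - 2 * s)) := by
    apply lintegral_congr_ae
    have h1 : ∀ᵐ z ∂(volume.restrict D2), z ∈ D2 := ae_restrict_mem meas_D2
    have h2 : ∀ᵐ z ∂(volume.restrict D2), z.2 ≠ 0 := by
      apply ae_restrict_of_ae
      rw [ae_iff]
      simp only [ne_eq, not_not]
      exact null2
    filter_upwards [h1, h2] with z hzD hz2
    have hy : 0 < ‖z.2‖ := norm_pos_iff.2 hz2
    have hAB : ‖z.1‖ ^ (2 * ar) ≤ ‖z.2‖ ^ 2 := by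
      have h := Real.rpow_le_rpow (norm_nonneg z.1) hzD.2
        (by linarith [ar_pos] : (0:ℝ) ≤ 2 * ar)
      rw [← Real.rpow_mul (norm_nonneg z.2)] at h
      rw [show ar⁻¹ * (2 * ar) = 2 by rw [mul_comm (2:ℝ) ar, ← mul_assoc, inv_mul_cancel₀ ar_ne, one_mul]] at h
      rwa [show ((2:ℝ)) = ((2:ℕ):ℝ) by norm_num, Real.rpow_natCast] at h
    unfold NN PP
    rw [max_eq_right hAB,
      ← ENNReal.ofReal_mul (Real.rpow_nonneg (norm_nonneg _) _)]
    congr 1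
    rw [← Real.rpow_natCast (‖z.2‖) 2, ← Real.rpow_mul (norm_nonneg z.2),
      mul_assoc, ← Real.rpow_add hy]
    congr 1
    push_cast
    ring
  -- computing the two regional integrals
  have hq2 : (-2:ℝ) < 2 * (q:ℝ) := by have : (0:ℝ) ≤ (q:ℝ) := Nat.cast_nonneg q; linarith
  have hp2 : (-2:ℝ) < 2 * (p:ℝ) := by have : (0:ℝ) ≤ (p:ℝ) := Nat.cast_nonneg p; linarith
  have hc1 : (∫⁻ z in D1, NN p q s z) < ⊤ ↔
      s < ((q:ℝ) + 1) + ((p:ℝ) + 1) / ar := by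
    rw [hr1, region1_gen _ _ hq2, const_mul_lt_top_iff
      ((ENNReal.mul_pos kc_ne_zero (ENNReal.ofReal_pos.2 (by positivity)).ne').ne')
      (ENNReal.mul_ne_top kc_ne_top ENNReal.ofReal_ne_top),
      unit_lintegral_lt_top_iff]
    rw [show 2 * (p:ℝ) - 2 * ar * s + ar * (2 * (q:ℝ) + 2)
        = 2 * (p:ℝ) - 2 * ar * s + ar * (2 * (q:ℝ) + 2) from rfl]
    exact arith1 p q s
  have hc2 : (∫⁻ z in D2, NN p q s z) < ⊤ ↔
      s < ((q:ℝ) + 1) + ((p:ℝ) + 1) / ar := by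
    rw [hr2, region2_gen _ _ hp2, const_mul_lt_top_iff
      ((ENNReal.mul_pos kc_ne_zero (ENNReal.ofReal_pos.2 (by positivity)).ne').ne')
      (ENNReal.mul_ne_top kc_ne_top ENNReal.ofReal_ne_top),
      unit_lintegral_lt_top_iff]
    exact arith2 p q s
  rw [hiff1, hcmp, hsplit, hc1, hc2, and_self]

end Stmt16


/-- The jumping numbers of `ψ(x,y) = log(|x|^{2α} + |y|²)`, `α = 1 − 2√6/5`,
are exactly the numbers `m + n/α` with `m, n ∈ ℤ`, `m, n ≥ 1`. -/
theorem stmt_16 :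
    {t : ℝ | 0 < t ∧ ∃ p q : ℕ,
        (∀ s : ℝ, 0 < s → s < t →
          IntegrableOn (fun x : ℂ × ℂ =>
              ‖x.1‖ ^ (2 * (p : ℝ)) * ‖x.2‖ ^ (2 * (q : ℝ)) *
                Real.exp (-(s * psiF x)))
            {x : ℂ × ℂ | ‖x.1‖ < 1 ∧ ‖x.2‖ < 1} volume) ∧
        ¬ IntegrableOn (fun x : ℂ × ℂ =>
              ‖x.1‖ ^ (2 * (p : ℝ)) * ‖x.2‖ ^ (2 * (q : ℝ)) *
                Real.exp (-(t * psiF x)))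
            {x : ℂ × ℂ | ‖x.1‖ < 1 ∧ ‖x.2‖ < 1} volume}
      = {T : ℝ | ∃ m n : ℤ, 1 ≤ m ∧ 1 ≤ n ∧
          T = (m : ℝ) + (n : ℝ) / (1 - 2 * Real.sqrt 6 / 5)} := by
  have hval : (1 - 2 * Real.sqrt 6 / 5 : ℝ) = Stmt16.ar := rfl
  ext t
  simp only [Set.mem_setOf_eq]
  constructor
  · rintro ⟨ht, p, q, hall, hnot⟩
    have hp0 : (0:ℝ) ≤ (p:ℝ) := Nat.cast_nonneg p
    have hq0 : (0:ℝ) ≤ (q:ℝ) := Nat.cast_nonneg q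
    have hdiv : (0:ℝ) < ((p:ℝ) + 1) / Stmt16.ar := div_pos (by linarith) Stmt16.ar_pos
    have hcpos : 0 < ((q:ℝ) + 1) + ((p:ℝ) + 1) / Stmt16.ar := by linarith
    have hge : ((q:ℝ) + 1) + ((p:ℝ) + 1) / Stmt16.ar ≤ t := by
      by_contra hlt
      push_neg at hlt
      exact hnot ((Stmt16.main_iff p q ht).2 hlt)
    have hle : t ≤ ((q:ℝ) + 1) + ((p:ℝ) + 1) / Stmt16.ar := by
      by_contra hlt
      push_neg at hlt
      exact absurd ((Stmt16.main_iff p q hcpos).1 (hall _ hcpos hlt)) (lt_irrefl _)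
    refine ⟨(q:ℤ) + 1, (p:ℤ) + 1, by omega, by omega, ?_⟩
    have heq : t = ((q:ℝ) + 1) + ((p:ℝ) + 1) / Stmt16.ar := le_antisymm hle hge
    rw [heq, hval]
    push_cast
    ring
  · rintro ⟨m, n, hm, hn, hT⟩
    have hn0 : (((n - 1).toNat : ℕ) : ℝ) = (n:ℝ) - 1 := by
      have h : (((n - 1).toNat : ℕ) : ℤ) = n - 1 := Int.toNat_of_nonneg (by omega)
      exact_mod_cast congrArg (fun x : ℤ => (x : ℝ)) h
    have hm0 : (((m - 1).toNat : ℕ) : ℝ) = (m:ℝ) - 1 := by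
      have h : (((m - 1).toNat : ℕ) : ℤ) = m - 1 := Int.toNat_of_nonneg (by omega)
      exact_mod_cast congrArg (fun x : ℤ => (x : ℝ)) h
    set p := (n - 1).toNat with hpdef
    set q := (m - 1).toNat with hqdef
    have hc : ((q:ℝ) + 1) + ((p:ℝ) + 1) / Stmt16.ar = t := by
      rw [hT, hm0, hn0, hval]
      ring
    have hTpos : 0 < t := by
      rw [← hc]
      have hp0 : (0:ℝ) ≤ (p:ℝ) := Nat.cast_nonneg p
      have hq0 : (0:ℝ) ≤ (q:ℝ) := Nat.cast_nonneg q
      have hdiv : (0:ℝ) < ((p:ℝ) + 1) / Stmt16.ar := div_pos (by linarith) Stmt16.ar_pos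
      linarith
    refine ⟨hTpos, p, q, ?_, ?_⟩
    · intro s hs0 hst
      refine (Stmt16.main_iff p q hs0).2 ?_
      rw [hc]
      exact hst
    · intro hint
      have h := (Stmt16.main_iff p q hTpos).1 hint
      rw [hc] at h
      exact lt_irrefl t h
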